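/- arXiv:1512.00739 — 2 statements merged into one kernel-verified Lean document; each statement's English description precedes it below -/
import Mathlib

section
/- Let μ be a finite Borel measure on ℂ^n whose support K = supp(μ) is a compact regular set, and suppose μ satisfies the mass density condition: there exist r₀ > 0 and T > 0 such that μ(B(z,r)) ≥ r^T for all z ∈ K and all 0 < r < r₀. Then (K, μ) satisfies the Bernstein–Markov property. -/
open MeasureTheory

variable {n : ℕ}

/-- The defining family for the extremal function of `E ⊆ ℂ^n`:
the values `(1/deg p) log |p(z)|` over nonconstant polynomials `p` with `sup_E |p| ≤ 1`. -/
def extremalSet (E : Set (EuclideanSpace ℂ (Fin n))) (z : EuclideanSpace ℂ (Fin n)) :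
    Set ℝ :=
  {v | ∃ p : MvPolynomial (Fin n) ℂ, 0 < p.totalDegree ∧
    (∀ w ∈ E, ‖MvPolynomial.eval (fun i => w i) p‖ ≤ 1) ∧
    v = (p.totalDegree : ℝ)⁻¹ * Real.log ‖MvPolynomial.eval (fun i => z i) p‖}

/-- The extremal function `V_E(z) = sup { (1/deg p) log |p(z)| }`. -/
noncomputable def extremalFunction (E : Set (EuclideanSpace ℂ (Fin n)))
    (z : EuclideanSpace ℂ (Fin n)) : ℝ :=
  sSup (extremalSet E z)

/-- A compact set `E ⊆ ℂ^n` is regular if its extremal function `V_E` is finite-valued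
and continuous on `ℂ^n`, with `V_E = 0` on `E`. -/
def RegularSet (E : Set (EuclideanSpace ℂ (Fin n))) : Prop :=
  (∀ z, BddAbove (extremalSet E z)) ∧ Continuous (extremalFunction E) ∧
    ∀ z ∈ E, extremalFunction E z = 0

variable [MeasurableSpace (EuclideanSpace ℂ (Fin n))]
  [BorelSpace (EuclideanSpace ℂ (Fin n))]

/-- `(K, ν)` satisfies the Bernstein–Markov property. -/
def BernsteinMarkov (K : Set (EuclideanSpace ℂ (Fin n)))
    (ν : Measure (EuclideanSpace ℂ (Fin n))) : Prop :=
  ∀ ε : ℝ, 0 < ε → ∃ C : ℝ, 0 < C ∧ ∀ k : ℕ, 1 ≤ k → ∀ p : MvPolynomial (Fin n) ℂ,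
    p.totalDegree ≤ k → ∀ z ∈ K,
      ‖MvPolynomial.eval (fun i => z i) p‖ ≤ C * (1 + ε) ^ k *
        Real.sqrt (∫ w in K, ‖MvPolynomial.eval (fun i => w i) p‖ ^ 2 ∂ν)

lemma myContEval (p : MvPolynomial (Fin n) ℂ) :
    Continuous fun w : EuclideanSpace ℂ (Fin n) => MvPolynomial.eval (fun i => w i) p := by
  have h1 : Continuous (fun w : EuclideanSpace ℂ (Fin n) => (fun i => w i : Fin n → ℂ)) :=
    PiLp.continuous_ofLp 2 fun _ : Fin n => ℂ
  exact (MvPolynomial.continuous_eval (p := p)).comp h1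

lemma myAevalEval (f : Fin n → ℂ) (p : MvPolynomial (Fin n) ℂ) :
    MvPolynomial.aeval f p = MvPolynomial.eval f p :=
  RingHom.congr_fun (MvPolynomial.coe_aeval_eq_eval f) p

lemma myKey (p : MvPolynomial (Fin n) ℂ) (z₀ u : EuclideanSpace ℂ (Fin n)) (t : ℂ) :
    Polynomial.eval t (MvPolynomial.aeval
      (fun i => Polynomial.C (z₀ i) + Polynomial.C (u i) * Polynomial.X) p)
      = MvPolynomial.eval (fun i => (z₀ + t • u) i) p := by
  have h := MvPolynomial.comp_aeval_apply (Polynomial.aeval t (R := ℂ) (A := ℂ))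
    (f := fun i : Fin n => Polynomial.C (z₀ i) + Polynomial.C (u i) * Polynomial.X) p
  simp only [Polynomial.coe_aeval_eq_eval] at h
  have hfun : (fun i : Fin n => Polynomial.eval t
      (Polynomial.C (z₀ i) + Polynomial.C (u i) * Polynomial.X))
      = (fun i : Fin n => (z₀ + t • u) i) := by
    funext i
    rw [Polynomial.eval_add, Polynomial.eval_C, Polynomial.eval_mul, Polynomial.eval_C,
      Polynomial.eval_X, PiLp.add_apply, PiLp.smul_apply, smul_eq_mul]
    ring
  rw [h, hfun, myAevalEval]

lemma myEqC {σ R : Type*} [CommSemiring R] {p : MvPolynomial σ R} (h : p.totalDegree = 0) :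
    p = MvPolynomial.C (MvPolynomial.coeff 0 p) := by
  classical
  ext m
  rw [MvPolynomial.coeff_C]
  split_ifs with hm
  · subst hm; rfl
  · by_contra hc
    have hmem : m ∈ p.support := MvPolynomial.mem_support_iff.mpr (by simpa using hc)
    have := (MvPolynomial.totalDegree_eq_zero_iff σ p).mp h m hmem
    exact hm (by ext x; simp [this x] : (0 : σ →₀ ℕ) = m)

lemma myDegSmul {σ : Type*} {p : MvPolynomial σ ℂ} {a : ℂ} (ha : a ≠ 0) :
    (MvPolynomial.C a * p).totalDegree = p.totalDegree := by
  apply le_antisymm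
  · rw [MvPolynomial.C_mul']
    exact MvPolynomial.totalDegree_smul_le a p
  · conv_lhs => rw [show p = MvPolynomial.C a⁻¹ * (MvPolynomial.C a * p) by
      rw [← mul_assoc, ← map_mul, inv_mul_cancel₀ ha, MvPolynomial.C_1, one_mul]]
    rw [MvPolynomial.C_mul']
    exact MvPolynomial.totalDegree_smul_le _ _

/-- If `μ` is a finite measure whose support `K` is a compact regular set and `μ`
satisfies the mass density condition `μ(B(z,r)) ≥ r^T` for all `z ∈ K` and `0 < r < r₀`,
then `(K, μ)` satisfies the Bernstein–Markov property. -/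
theorem mass_density_implies_bernstein_markov
    (μ : Measure (EuclideanSpace ℂ (Fin n))) [IsFiniteMeasure μ]
    (K : Set (EuclideanSpace ℂ (Fin n)))
    (hsupp : ∀ z, z ∈ K ↔ ∀ r : ℝ, 0 < r → 0 < μ (Metric.ball z r))
    (hKc : IsCompact K) (hreg : RegularSet K)
    (r₀ T : ℝ) (hr₀ : 0 < r₀) (hT : 0 < T)
    (hmass : ∀ z ∈ K, ∀ r : ℝ, 0 < r → r < r₀ →
      ENNReal.ofReal (r ^ T) ≤ μ (Metric.ball z r)) :
    BernsteinMarkov K μ := by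
  obtain ⟨hbdd, hcont, hzero⟩ := hreg
  intro ε hε
  have h1ε : (1:ℝ) < 1 + ε := by linarith
  set L := Real.log (1 + ε) with hLdef
  have hL : 0 < L := Real.log_pos h1ε
  set ε' := 2 / T * L with hε'def
  have hε' : 0 < ε' := mul_pos (div_pos two_pos hT) hL
  -- choose δ
  have hU : IsOpen {w : EuclideanSpace ℂ (Fin n) | extremalFunction K w < ε'} :=
    isOpen_lt hcont continuous_const
  have hKU : K ⊆ {w | extremalFunction K w < ε'} := fun w hw => by
    simp only [Set.mem_setOf_eq, hzero w hw]; exact hε'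
  obtain ⟨δ, hδ, hthick⟩ := hKc.exists_thickening_subset_open hU hKU
  set ρ := min δ r₀ / 6 with hρdef
  have hρ : 0 < ρ := by positivity
  have hρδ : ρ ≤ δ / 6 := by
    rw [hρdef]; exact div_le_div_of_nonneg_right (min_le_left _ _) (by norm_num)
  have hρr₀ : ρ ≤ r₀ / 6 := by
    rw [hρdef]; exact div_le_div_of_nonneg_right (min_le_right _ _) (by norm_num)
  refine ⟨2 / ρ ^ (T/2), by positivity, ?_⟩
  intro k hk p hdeg z hz
  set N := fun w : EuclideanSpace ℂ (Fin n) => ‖MvPolynomial.eval (fun i => w i) p‖ with hN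
  have hNcont : Continuous N := (myContEval p).norm
  obtain ⟨z₀, hz₀K, hz₀max⟩ := hKc.exists_isMaxOn ⟨z, hz⟩ hNcont.continuousOn
  set M := N z₀ with hMdef
  have hM0 : 0 ≤ M := norm_nonneg _
  set I := ∫ w in K, N w ^ 2 ∂μ with hIdef
  have hI0 : 0 ≤ I := setIntegral_nonneg hKc.isClosed.measurableSet fun w _ => by positivity
  rcases eq_or_lt_of_le hM0 with hM | hM
  · -- M = 0
    have hzle : N z ≤ 0 := (hz₀max hz).trans_eq hM.symm
    have : N z = 0 := le_antisymm hzle (norm_nonneg _)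
    rw [show ‖MvPolynomial.eval (fun i => z i) p‖ = N z from rfl, this]
    have hρpow : (0:ℝ) < ρ ^ (T/2) := Real.rpow_pos_of_pos hρ _
    exact mul_nonneg (mul_nonneg (by positivity) (pow_nonneg (by linarith) k))
      (Real.sqrt_nonneg _)
  -- Bernstein–Walsh bound on the δ-neighborhood
  have hexp1 : 1 ≤ Real.exp (k * ε') := Real.one_le_exp (by positivity)
  have hBW : ∀ w ∈ Metric.ball z₀ δ, N w ≤ M * Real.exp (k * ε') := by
    intro w hw
    have hVw : extremalFunction K w < ε' :=
      hthick (Metric.ball_subset_thickening hz₀K δ hw)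
    rcases Nat.eq_zero_or_pos p.totalDegree with hd0 | hdpos
    · have hp := myEqC hd0
      have hNwM : N w = M := by
        rw [hMdef, hN]; simp only; rw [hp]; simp [MvPolynomial.eval_C]
      rw [hNwM]
      exact le_mul_of_one_le_right hM.le hexp1
    · by_cases hNw : N w = 0
      · rw [hNw]; positivity
      · have hNwpos : 0 < N w := lt_of_le_of_ne (norm_nonneg _) (Ne.symm hNw)
        set a : ℂ := ((M : ℂ))⁻¹ with hadef
        have ha : a ≠ 0 := inv_ne_zero (Complex.ofReal_ne_zero.mpr hM.ne')
        set q := MvPolynomial.C a * p with hqdef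
        have hqdeg : q.totalDegree = p.totalDegree := myDegSmul ha
        have hnormq : ∀ v : EuclideanSpace ℂ (Fin n),
            ‖MvPolynomial.eval (fun i => v i) q‖ = M⁻¹ * N v := by
          intro v
          rw [hqdef, map_mul, MvPolynomial.eval_C, norm_mul, hadef, norm_inv,
            Complex.norm_real, Real.norm_eq_abs, abs_of_pos hM]
        have hmem : ((q.totalDegree : ℝ)⁻¹ *
            Real.log ‖MvPolynomial.eval (fun i => w i) q‖) ∈ extremalSet K w := by
          refine ⟨q, hqdeg ▸ hdpos, fun v hv => ?_, rfl⟩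
          rw [hnormq v]
          calc M⁻¹ * N v ≤ M⁻¹ * M :=
                mul_le_mul_of_nonneg_left (hz₀max hv) (inv_nonneg.mpr hM.le)
          _ = 1 := inv_mul_cancel₀ hM.ne'
        have hle : ((q.totalDegree : ℝ)⁻¹ *
            Real.log ‖MvPolynomial.eval (fun i => w i) q‖) < ε' :=
          (le_csSup (hbdd w) hmem).trans_lt hVw
        rw [hnormq w, hqdeg] at hle
        have hd : (0:ℝ) < (p.totalDegree : ℝ) := by exact_mod_cast hdpos
        have hlog : Real.log (M⁻¹ * N w) < (p.totalDegree : ℝ) * ε' :=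
          (inv_mul_lt_iff₀ hd).mp hle
        have hpos : 0 < M⁻¹ * N w := mul_pos (inv_pos.mpr hM) hNwpos
        have hlt : M⁻¹ * N w < Real.exp ((p.totalDegree : ℝ) * ε') :=
          (Real.log_lt_iff_lt_exp hpos).mp hlog
        have hexpmono : Real.exp ((p.totalDegree : ℝ) * ε') ≤ Real.exp (k * ε') := by
          apply Real.exp_le_exp.mpr
          apply mul_le_mul_of_nonneg_right _ hε'.le
          exact_mod_cast hdeg
        have := hlt.trans_le hexpmono
        calc N w = M * (M⁻¹ * N w) := by field_simp
        _ ≤ M * Real.exp (k * ε') := mul_le_mul_of_nonneg_left this.le hM.le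
  -- Schwarz lemma lower bound
  set r := ρ * Real.exp (-(k * ε')) with hrdef
  have hrpos : 0 < r := by positivity
  have hexple : Real.exp (-(k * ε')) ≤ 1 := Real.exp_le_one_iff.mpr (by positivity |> neg_nonpos_of_nonneg)
  have hrρ : r ≤ ρ := by
    calc r ≤ ρ * 1 := by apply mul_le_mul_of_nonneg_left hexple hρ.le
    _ = ρ := mul_one ρ
  have hrr₀ : r < r₀ := lt_of_le_of_lt (hrρ.trans hρr₀) (by linarith)
  have hrδ : r < δ := lt_of_le_of_lt (hrρ.trans hρδ) (by linarith)
  have hlow : ∀ w ∈ Metric.ball z₀ r, M / 2 ≤ N w := by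
    intro w hw
    rcases eq_or_ne w z₀ with rfl | hne
    · linarith
    set u := w - z₀ with hu
    have hune : u ≠ 0 := sub_ne_zero.mpr hne
    have hunorm : ‖u‖ < r := by
      rw [hu, ← dist_eq_norm]; exact Metric.mem_ball.mp hw
    have hupos : 0 < ‖u‖ := norm_pos_iff.mpr hune
    set q := MvPolynomial.aeval
      (fun i => Polynomial.C (z₀ i) + Polynomial.C (u i) * Polynomial.X) p with hqdef
    set f : ℂ → ℂ := fun t => Polynomial.eval t q with hfdef
    have hf : ∀ t : ℂ, f t = MvPolynomial.eval (fun i => (z₀ + t • u) i) p :=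
      fun t => myKey p z₀ u t
    have hf0 : f 0 = MvPolynomial.eval (fun i => z₀ i) p := by
      rw [hf 0, show z₀ + (0:ℂ) • u = z₀ by rw [zero_smul, add_zero]]
    have hf1 : f 1 = MvPolynomial.eval (fun i => w i) p := by
      rw [hf 1, show z₀ + (1:ℂ) • u = w by rw [one_smul, hu, add_sub_cancel]]
    have hE : 0 < M * Real.exp (k * ε') := by positivity
    have hmaps : Set.MapsTo f (Metric.ball 0 (δ / ‖u‖))
        (Metric.ball (f 0) (3 * (M * Real.exp (k * ε')))) := by
      intro t ht
      have htn : ‖t‖ < δ / ‖u‖ := by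
        simpa [Metric.mem_ball, dist_zero_right] using ht
      have hmemδ : z₀ + t • u ∈ Metric.ball z₀ δ := by
        rw [Metric.mem_ball, dist_eq_norm, add_sub_cancel_left, norm_smul]
        exact (lt_div_iff₀ hupos).mp htn
      have h1 : ‖f t‖ ≤ M * Real.exp (k * ε') := by
        rw [hf t]; exact hBW _ hmemδ
      have h0 : ‖f 0‖ ≤ M * Real.exp (k * ε') := by
        rw [hf0]
        exact le_mul_of_one_le_right hM.le hexp1
      rw [Metric.mem_ball, dist_eq_norm]
      calc ‖f t - f 0‖ ≤ ‖f t‖ + ‖f 0‖ := norm_sub_le _ _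
      _ ≤ 2 * (M * Real.exp (k * ε')) := by linarith
      _ < 3 * (M * Real.exp (k * ε')) := by linarith
    have hdiff : DifferentiableOn ℂ f (Metric.ball 0 (δ / ‖u‖)) :=
      (Polynomial.differentiable q).differentiableOn
    have h1mem : (1:ℂ) ∈ Metric.ball (0:ℂ) (δ / ‖u‖) := by
      rw [Metric.mem_ball, dist_zero_right, norm_one]
      rw [lt_div_iff₀ hupos, one_mul]
      linarith
    have hSch := Complex.dist_le_div_mul_dist_of_mapsTo_ball hdiff
      (hmaps.mono_right Metric.ball_subset_closedBall) h1mem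
    have hd10 : dist (1:ℂ) 0 = 1 := by simp
    rw [hd10, mul_one] at hSch
    have hbound : 3 * (M * Real.exp (k * ε')) / (δ / ‖u‖) ≤ M / 2 := by
      rw [div_div_eq_mul_div, div_le_div_iff₀ (by linarith) (by norm_num)]
      have haux : Real.exp (k * ε') * ‖u‖ ≤ δ / 6 := by
        have h1 : Real.exp (k * ε') * ‖u‖ ≤ Real.exp (k * ε') * r :=
          mul_le_mul_of_nonneg_left hunorm.le (Real.exp_pos _).le
        have h2 : Real.exp (k * ε') * r = ρ := by
          rw [hrdef, ← mul_assoc, mul_comm (Real.exp _), mul_assoc,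
            ← Real.exp_add]
          simp
        linarith [hρδ]
      nlinarith [hM.le]
    have hfinal : dist (f 1) (f 0) ≤ M / 2 := hSch.trans hbound
    have hnorm : M - N w ≤ M / 2 := by
      have h1 : ‖f 0‖ - ‖f 1‖ ≤ ‖f 0 - f 1‖ := norm_sub_norm_le _ _
      rw [hf0, hf1] at h1
      rw [dist_comm, dist_eq_norm] at hfinal
      calc M - N w ≤ ‖f 0 - f 1‖ := by rw [hf0, hf1]; exact h1.trans_eq' (by rw [hMdef, hN])
      _ ≤ M / 2 := hfinal.trans_eq' (by rw [hf0, hf1])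
    linarith
  -- measure bound
  have hKnull : μ Kᶜ = 0 := by
    apply measure_null_of_locally_null
    intro x hx
    rw [Set.mem_compl_iff] at hx
    have := (not_iff_not.mpr (hsupp x)).mp hx
    push_neg at this
    obtain ⟨s, hs, hμs⟩ := this
    exact ⟨Metric.ball x s, mem_nhdsWithin_of_mem_nhds (Metric.ball_mem_nhds x hs),
      le_antisymm hμs zero_le⟩
  have hInt : IntegrableOn (fun w => N w ^ 2) K μ :=
    (hNcont.pow 2).continuousOn.integrableOn_compact hKc
  have hμball : ENNReal.ofReal (r ^ T) ≤ μ (Metric.ball z₀ r) := hmass z₀ hz₀K r hrpos hrr₀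
  have hμeq : μ (Metric.ball z₀ r ∩ K) = μ (Metric.ball z₀ r) := measure_inter_conull hKnull
  have hI1 : (M/2)^2 * (μ (Metric.ball z₀ r ∩ K)).toReal
      ≤ ∫ w in Metric.ball z₀ r ∩ K, N w ^ 2 ∂μ := by
    show (M/2)^2 * μ.real (Metric.ball z₀ r ∩ K) ≤ _
    apply setIntegral_ge_of_const_le_real
      (Metric.isOpen_ball.measurableSet.inter hKc.isClosed.measurableSet)
      (measure_ne_top μ _)
    · intro x hx
      have := hlow x hx.1
      have h2 : 0 ≤ M / 2 := by linarith
      calc (M/2)^2 ≤ (N x)^2 := pow_le_pow_left₀ h2 this 2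
      _ = N x ^ 2 := rfl
    · exact hInt.mono_set Set.inter_subset_right
  have hI2 : ∫ w in Metric.ball z₀ r ∩ K, N w ^ 2 ∂μ ≤ I := by
    apply setIntegral_mono_set hInt
    · exact Filter.Eventually.of_forall fun w => by positivity
    · exact HasSubset.Subset.eventuallyLE Set.inter_subset_right
  have hrT : r ^ T ≤ (μ (Metric.ball z₀ r ∩ K)).toReal := by
    rw [hμeq]
    exact (ENNReal.ofReal_le_iff_le_toReal (measure_ne_top μ _)).mp hμball
  have hImain : (M/2)^2 * r ^ T ≤ I := by
    calc (M/2)^2 * r ^ T ≤ (M/2)^2 * (μ (Metric.ball z₀ r ∩ K)).toReal := by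
          apply mul_le_mul_of_nonneg_left hrT (by positivity)
    _ ≤ I := hI1.trans hI2
  -- final arithmetic
  have hρpow : (0:ℝ) < ρ ^ (T/2) := Real.rpow_pos_of_pos hρ _
  have hpowk : (0:ℝ) < (1 + ε) ^ k := pow_pos (by linarith) k
  set s := r ^ (T/2) with hsdef
  have hspos : 0 < s := Real.rpow_pos_of_pos hrpos _
  have hs2 : s ^ 2 = r ^ T := by
    rw [hsdef, ← Real.rpow_natCast (r ^ (T/2)) 2, ← Real.rpow_mul hrpos.le]
    norm_num
  have hsq : (M/2 * s) ^ 2 ≤ I := by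
    rw [mul_pow, hs2]; exact hImain
  have h3 : M/2 * s ≤ Real.sqrt I := by
    have h := Real.sqrt_le_sqrt hsq
    rwa [Real.sqrt_sq (by positivity)] at h
  have hεL : Real.exp L = 1 + ε := Real.exp_log (by linarith)
  have hsval : s = ρ ^ (T/2) / (1 + ε) ^ k := by
    rw [hsdef, hrdef, Real.mul_rpow hρ.le (Real.exp_pos _).le]
    congr 1
    rw [← Real.exp_mul]
    have harg : -(↑k * ε') * (T/2) = -(↑k * L) := by
      rw [hε'def]; field_simp
    rw [harg, Real.exp_neg, mul_comm (k:ℝ) L, Real.exp_mul, hεL, Real.rpow_natCast,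
      inv_eq_one_div]
  rw [hsval] at h3
  have h5 := mul_le_mul_of_nonneg_left h3 (le_of_lt (by positivity : (0:ℝ) < 2 * (1 + ε) ^ k))
  have h6 : 2 * (1 + ε) ^ k * (M/2 * (ρ ^ (T/2) / (1 + ε) ^ k)) = M * ρ ^ (T/2) := by
    field_simp
  rw [h6] at h5
  have hNz : ‖MvPolynomial.eval (fun i => z i) p‖ ≤ M := hz₀max hz
  calc ‖MvPolynomial.eval (fun i => z i) p‖ ≤ M := hNz
  _ ≤ 2 / ρ ^ (T/2) * (1 + ε) ^ k * Real.sqrt I := by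
      rw [show 2 / ρ ^ (T/2) * (1 + ε) ^ k * Real.sqrt I
          = 2 * (1 + ε) ^ k * Real.sqrt I / ρ ^ (T/2) by ring,
        le_div_iff₀ hρpow]
      linarith
end

section
/- Fix d ≥ 2, α ∈ (0,d], and m with 1 ≤ m ≤ d. Let K ⊂ ℝ^d be a compact smooth m-dimensional embedded submanifold of ℝ^d and let Q : ℝ^d → ℝ be continuously differentiable. For n ≥ 2 and points x_2,…,x_n ∈ K define f : ℝ^d → ℝ by f(y) = exp(−∑_{j=2}^n |y−x_j|^{−α} − 2nQ(y)) for y ∉ {x_2,…,x_n}, and f(x_j) = 0. Let μ be a finite positive Borel measure on K for which there exist r₀ > 0 and T > 0 with μ(B(x,r)) ≥ r^T for all x ∈ K and 0 < r < r₀. Then there exist constants M_n > 0 with M_n^{1/n} → 1 as n → ∞ such that for all n ≥ 2 and all choices x_2,…,x_n ∈ K, sup_{y ∈ K} f(y) ≤ M_n ∫_K f dμ. -/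
open MeasureTheory Manifold Filter
open scoped Classical

/-- The Riesz-discretization function `f(y) = exp(-∑_j |y - x_j|^{-α} - 2nQ(y))` for
`y ∉ {x_2,…,x_n}`, extended by `0` at the points `x_j`. -/
noncomputable def rieszF {d : ℕ} (α : ℝ) (n : ℕ) (Q : EuclideanSpace ℝ (Fin d) → ℝ)
    (x : Fin (n - 1) → EuclideanSpace ℝ (Fin d)) (y : EuclideanSpace ℝ (Fin d)) : ℝ :=
  if y ∈ Set.range x then 0
  else Real.exp (-(∑ j, ‖y - x j‖ ^ (-α)) - 2 * (n : ℝ) * Q y)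


open scoped RealInnerProductSpace
open Metric

open MeasureTheory Manifold Filter
open scoped Classical RealInnerProductSpace
open Filter Real

def SlowLog (u : ℕ → ℝ) : Prop :=
  ∃ A B : ℝ, 0 ≤ A ∧ 0 ≤ B ∧
    ∀ᶠ n : ℕ in atTop, 0 < u n ∧ |Real.log (u n)| ≤ A + B * Real.log n

lemma slowLog_pos {u : ℕ → ℝ} (h : SlowLog u) : ∀ᶠ n : ℕ in atTop, 0 < u n := by
  obtain ⟨A, B, _, _, h⟩ := h; filter_upwards [h] with n hn using hn.1

lemma eventually_log_nonneg : ∀ᶠ n : ℕ in atTop, 0 ≤ Real.log (n : ℝ) := by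
  filter_upwards [eventually_ge_atTop 1] with n hn
  exact Real.log_nonneg (by exact_mod_cast hn)

lemma slowLog_const {c : ℝ} (hc : 0 < c) : SlowLog (fun _ => c) := by
  refine ⟨|Real.log c|, 0, abs_nonneg _, le_refl _, ?_⟩
  filter_upwards with n using ⟨hc, by simp⟩

lemma slowLog_rpow (c : ℝ) : SlowLog (fun n => (n : ℝ) ^ c) := by
  refine ⟨0, |c|, le_refl _, abs_nonneg _, ?_⟩
  filter_upwards [eventually_ge_atTop 1] with n hn
  have hn1 : (1:ℝ) ≤ (n:ℝ) := by exact_mod_cast hn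
  have hn0 : (0:ℝ) < n := by linarith
  constructor
  · exact Real.rpow_pos_of_pos hn0 c
  · rw [Real.log_rpow hn0, abs_mul, abs_of_nonneg (Real.log_nonneg hn1)]
    rw [zero_add]

lemma slowLog_mul {u v : ℕ → ℝ} (hu : SlowLog u) (hv : SlowLog v) :
    SlowLog (fun n => u n * v n) := by
  obtain ⟨A1, B1, hA1, hB1, h1⟩ := hu
  obtain ⟨A2, B2, hA2, hB2, h2⟩ := hv
  refine ⟨A1 + A2, B1 + B2, by linarith, by linarith, ?_⟩
  filter_upwards [h1, h2, eventually_log_nonneg] with n hn1 hn2 hln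
  refine ⟨mul_pos hn1.1 hn2.1, ?_⟩
  rw [Real.log_mul hn1.1.ne' hn2.1.ne']
  calc |Real.log (u n) + Real.log (v n)| ≤ |Real.log (u n)| + |Real.log (v n)| := abs_add_le _ _
    _ ≤ (A1 + B1 * Real.log n) + (A2 + B2 * Real.log n) := add_le_add hn1.2 hn2.2
    _ = (A1 + A2) + (B1 + B2) * Real.log n := by ring

lemma slowLog_inv {u : ℕ → ℝ} (hu : SlowLog u) : SlowLog (fun n => (u n)⁻¹) := by
  obtain ⟨A, B, hA, hB, h⟩ := hu
  refine ⟨A, B, hA, hB, ?_⟩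
  filter_upwards [h] with n hn
  exact ⟨inv_pos.mpr hn.1, by rw [Real.log_inv, abs_neg]; exact hn.2⟩

lemma slowLog_div {u v : ℕ → ℝ} (hu : SlowLog u) (hv : SlowLog v) :
    SlowLog (fun n => u n / v n) := by
  simpa [div_eq_mul_inv] using slowLog_mul hu (slowLog_inv hv)

lemma slowLog_min {u v : ℕ → ℝ} (hu : SlowLog u) (hv : SlowLog v) :
    SlowLog (fun n => min (u n) (v n)) := by
  obtain ⟨A1, B1, hA1, hB1, h1⟩ := hu
  obtain ⟨A2, B2, hA2, hB2, h2⟩ := hv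
  refine ⟨A1 + A2, B1 + B2, by linarith, by linarith, ?_⟩
  filter_upwards [h1, h2, eventually_log_nonneg] with n hn1 hn2 hln
  refine ⟨lt_min hn1.1 hn2.1, ?_⟩
  rcases min_cases (u n) (v n) with ⟨h, -⟩ | ⟨h, -⟩ <;> rw [h] <;> nlinarith [hn1.2, hn2.2]

lemma slowLog_rpow_comp {u : ℕ → ℝ} (hu : SlowLog u) (c : ℝ) :
    SlowLog (fun n => u n ^ c) := by
  obtain ⟨A, B, hA, hB, h⟩ := hu
  refine ⟨|c| * A, |c| * B, by positivity, by positivity, ?_⟩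
  filter_upwards [h] with n hn
  refine ⟨Real.rpow_pos_of_pos hn.1 c, ?_⟩
  rw [Real.log_rpow hn.1, abs_mul]
  calc |c| * |Real.log (u n)| ≤ |c| * (A + B * Real.log n) :=
        mul_le_mul_of_nonneg_left hn.2 (abs_nonneg c)
    _ = |c| * A + |c| * B * Real.log n := by ring

lemma slowLog_of_le {u v : ℕ → ℝ} (hv : SlowLog v)
    (h : ∀ᶠ n : ℕ in atTop, 1 ≤ u n ∧ u n ≤ v n) : SlowLog u := by
  obtain ⟨A, B, hA, hB, hv'⟩ := hv
  refine ⟨A, B, hA, hB, ?_⟩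
  filter_upwards [h, hv'] with n hn hvn
  have h0 : 0 < u n := lt_of_lt_of_le one_pos hn.1
  refine ⟨h0, ?_⟩
  rw [abs_of_nonneg (Real.log_nonneg hn.1)]
  calc Real.log (u n) ≤ Real.log (v n) := Real.log_le_log h0 hn.2
    _ ≤ |Real.log (v n)| := le_abs_self _
    _ ≤ A + B * Real.log n := hvn.2

lemma log_nat_div_tendsto : Tendsto (fun n : ℕ => Real.log n / n) atTop (nhds 0) := by
  have hc : Tendsto (fun n : ℕ => (n : ℝ)) atTop atTop := tendsto_natCast_atTop_atTop
  have h := Real.isLittleO_log_id_atTop.comp_tendsto hc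
  simpa [Function.comp] using h.tendsto_div_nhds_zero

lemma slowLog_tendsto {u : ℕ → ℝ} (hu : SlowLog u) :
    Tendsto (fun n : ℕ => |Real.log (u n)| / n) atTop (nhds 0) := by
  obtain ⟨A, B, hA, hB, h⟩ := hu
  have hrhs : Tendsto (fun n : ℕ => A / n + B * (Real.log n / n)) atTop (nhds 0) := by
    have h1 : Tendsto (fun n : ℕ => A / n) atTop (nhds 0) :=
      tendsto_const_div_atTop_nhds_zero_nat A
    have h2 := log_nat_div_tendsto.const_mul B
    simpa using h1.add h2
  refine tendsto_of_tendsto_of_tendsto_of_le_of_le' tendsto_const_nhds hrhs ?_ ?_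
  · filter_upwards with n using by positivity
  · filter_upwards [h, eventually_ge_atTop 1] with n hn hn1
    have hnp : (0:ℝ) < n := by exact_mod_cast hn1
    have h1 : |Real.log (u n)| / n ≤ (A + B * Real.log n) / n := by
      gcongr
      exact hn.2
    have h2 : (A + B * Real.log n) / n = A / n + B * (Real.log n / n) := by ring
    linarith [h1, h2.le]
open Filter Real

noncomputable def rbmρ (D : ℝ) (n : ℕ) : ℝ := D / (4*n)
noncomputable def rbmS (D r₀ : ℝ) (n : ℕ) : ℝ := min (rbmρ D n / 2) (r₀/2)
noncomputable def rbmSg (α D : ℝ) (n : ℕ) : ℝ := n * (rbmρ D n / 2) ^ (-α)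
noncomputable def rbmP (α D r₀ T Λ : ℝ) (n : ℕ) : ℝ :=
  rbmSg α D n + 4*n*(Λ+1) + T * |Real.log (rbmS D r₀ n)| + 1
noncomputable def rbmδ (α D r₀ T Λ : ℝ) (n : ℕ) : ℝ := rbmP α D r₀ T Λ n ^ (-1/α)
noncomputable def rbmε (n : ℕ) : ℝ := (n:ℝ) ^ (-(1/2) : ℝ)
noncomputable def rbmh (α D r₀ T Λ : ℝ) (n : ℕ) : ℝ :=
  min (rbmε n / (4*α*rbmP α D r₀ T Λ n)) (min (1/2) (1/(4*α)))
noncomputable def rbmg (α D r₀ T Λ L : ℝ) (n : ℕ) : ℝ :=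
  min (rbmδ α D r₀ T Λ n * rbmh α D r₀ T Λ n) (min (rbmε n / (L+1)) (min (r₀/2) 1))
noncomputable def rbmM (α D r₀ T Λ L : ℝ) (n : ℕ) : ℝ :=
  Real.exp (3*((n:ℝ)*rbmε n) + T * |Real.log (rbmg α D r₀ T Λ L n)|)

section basic
variable {α D r₀ T Λ L : ℝ} {n : ℕ}
variable (hα : 0 < α) (hD : 0 < D) (hr₀ : 0 < r₀) (hT : 0 < T) (hΛ : 0 ≤ Λ) (hL : 0 ≤ L)
variable (hn : 1 ≤ n)

include hD hn in
lemma rbmρ_pos : 0 < rbmρ D n := by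
  have : (0:ℝ) < n := by exact_mod_cast hn
  unfold rbmρ; positivity

include hD hr₀ hn in
lemma rbmS_pos : 0 < rbmS D r₀ n :=
  lt_min (by linarith [rbmρ_pos hD hn]) (by linarith)

include hr₀ in
lemma rbmS_lt : rbmS D r₀ n < r₀ := lt_of_le_of_lt (min_le_right _ _) (by linarith)

lemma rbmS_le : rbmS D r₀ n ≤ rbmρ D n / 2 := min_le_left _ _

include hD hn in
lemma rbmSg_nonneg : 0 ≤ rbmSg α D n := by
  unfold rbmSg
  have h1 : (0:ℝ) ≤ (n:ℝ) := Nat.cast_nonneg n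
  exact mul_nonneg h1 (Real.rpow_nonneg (by linarith [rbmρ_pos hD hn]) _)

include hα hD hr₀ hT hΛ hn in
lemma rbmP_one_le : 1 ≤ rbmP α D r₀ T Λ n := by
  unfold rbmP
  have h1 := rbmSg_nonneg hD hn (α := α)
  have h2 : (0:ℝ) ≤ 4*n*(Λ+1) := by positivity
  have h3 : (0:ℝ) ≤ T * |Real.log (rbmS D r₀ n)| := by positivity
  linarith

include hα hD hr₀ hT hΛ hn in
lemma rbmP_pos : 0 < rbmP α D r₀ T Λ n :=
  lt_of_lt_of_le one_pos (rbmP_one_le hα hD hr₀ hT hΛ hn)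

include hα hD hr₀ hT hΛ hn in
lemma rbmδ_pos : 0 < rbmδ α D r₀ T Λ n :=
  Real.rpow_pos_of_pos (rbmP_pos hα hD hr₀ hT hΛ hn) _

include hα hD hr₀ hT hΛ hn in
lemma rbmδ_rpow : rbmδ α D r₀ T Λ n ^ (-α) = rbmP α D r₀ T Λ n := by
  unfold rbmδ
  rw [← Real.rpow_mul (rbmP_pos hα hD hr₀ hT hΛ hn).le]
  rw [show (-1/α) * (-α) = (1:ℝ) by field_simp]
  exact Real.rpow_one _

include hn in
lemma rbmε_pos : 0 < rbmε n := by
  have : (0:ℝ) < n := by exact_mod_cast hn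
  exact Real.rpow_pos_of_pos this _

lemma rbmε_nonneg : 0 ≤ rbmε n := Real.rpow_nonneg (Nat.cast_nonneg n) _

include hα hD hr₀ hT hΛ hn in
lemma rbmh_pos : 0 < rbmh α D r₀ T Λ n := by
  have h1 := rbmε_pos hn
  have h2 := rbmP_pos hα hD hr₀ hT hΛ hn
  refine lt_min (by positivity) (lt_min (by norm_num) (by positivity))

include hα hD hr₀ hT hΛ hL hn in
lemma rbmg_pos : 0 < rbmg α D r₀ T Λ L n := by
  have h1 := rbmε_pos hn
  have h2 := rbmδ_pos hα hD hr₀ hT hΛ hn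
  have h3 := rbmh_pos hα hD hr₀ hT hΛ hn
  have hL1 : (0:ℝ) < L + 1 := by linarith
  exact lt_min (by positivity) (lt_min (by positivity) (lt_min (by linarith) one_pos))

include hr₀ in
lemma rbmg_lt : rbmg α D r₀ T Λ L n < r₀ :=
  lt_of_le_of_lt ((min_le_right _ _).trans ((min_le_right _ _).trans (min_le_left _ _))) (by linarith)

lemma rbmg_le_one : rbmg α D r₀ T Λ L n ≤ 1 :=
  (min_le_right _ _).trans ((min_le_right _ _).trans (min_le_right _ _))

lemma rbmg_le_dh : rbmg α D r₀ T Λ L n ≤ rbmδ α D r₀ T Λ n * rbmh α D r₀ T Λ n :=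
  min_le_left _ _

lemma rbmg_le_εL : rbmg α D r₀ T Λ L n ≤ rbmε n / (L+1) :=
  (min_le_right _ _).trans (min_le_left _ _)

include hT in
lemma rbmM_one_le : 1 ≤ rbmM α D r₀ T Λ L n := by
  unfold rbmM
  rw [← Real.exp_zero]
  apply Real.exp_le_exp.mpr
  have h1 := rbmε_nonneg (n := n)
  have h2 : (0:ℝ) ≤ T * |Real.log (rbmg α D r₀ T Λ L n)| := by positivity
  have h3 : (0:ℝ) ≤ (n:ℝ) := Nat.cast_nonneg n
  positivity

lemma rbmM_pos : 0 < rbmM α D r₀ T Λ L n := Real.exp_pos _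

end basic

section asympt
variable {α D r₀ T Λ L : ℝ}
variable (hα : 0 < α) (hD : 0 < D) (hr₀ : 0 < r₀) (hT : 0 < T) (hΛ : 0 ≤ Λ) (hL : 0 ≤ L)

noncomputable def rbmCP (α D r₀ T Λ : ℝ) : ℝ :=
  (8/D)^α + 4*(Λ+1) + T*(|Real.log D| + Real.log 8 + |Real.log (r₀/2)| + 1) + 1

include hD hΛ hT in
lemma rbmCP_pos : 0 < rbmCP α D r₀ T Λ := by
  unfold rbmCP
  have h8 : (0:ℝ) ≤ Real.log 8 := Real.log_nonneg (by norm_num)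
  have h1 : (0:ℝ) ≤ (8/D)^α := Real.rpow_nonneg (by positivity) _
  have h2 : (0:ℝ) ≤ T*(|Real.log D| + Real.log 8 + |Real.log (r₀/2)| + 1) := by positivity
  nlinarith

include hα hD hr₀ hT hΛ in
lemma rbmP_upper {n : ℕ} (hn : 1 ≤ n) :
    rbmP α D r₀ T Λ n ≤ rbmCP α D r₀ T Λ * (n:ℝ) ^ (α+1) := by
  have hn1 : (1:ℝ) ≤ (n:ℝ) := by exact_mod_cast hn
  have hn0 : (0:ℝ) < (n:ℝ) := by linarith
  have hρ2 : rbmρ D n / 2 = D / (8*(n:ℝ)) := by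
    show D / (4*(n:ℝ)) / 2 = D / (8*(n:ℝ))
    rw [div_div]; ring_nf
  have hpow1 : (1:ℝ) ≤ (n:ℝ) ^ (α+1) := Real.one_le_rpow hn1 (by linarith)
  have hnle : (n:ℝ) ≤ (n:ℝ) ^ (α+1) := by
    calc (n:ℝ) = (n:ℝ) ^ (1:ℝ) := (Real.rpow_one _).symm
      _ ≤ (n:ℝ) ^ (α+1) := Real.rpow_le_rpow_of_exponent_le hn1 (by linarith)
  have hlogn : Real.log (n:ℝ) ≤ (n:ℝ) ^ (α+1) := by
    have := Real.log_le_sub_one_of_pos hn0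
    linarith
  have hlogn0 : 0 ≤ Real.log (n:ℝ) := Real.log_nonneg hn1
  have hSg : rbmSg α D n = (8/D)^α * (n:ℝ) ^ (α+1) := by
    unfold rbmSg
    rw [hρ2]
    have h1 : (D / (8*(n:ℝ))) ^ (-α) = ((8/D)*(n:ℝ)) ^ α := by
      rw [Real.rpow_neg (by positivity), ← Real.inv_rpow (by positivity), inv_div]
      congr 1
      field_simp
    rw [h1, Real.mul_rpow (by positivity) hn0.le, Real.rpow_add_one hn0.ne']
    ring
  have hlogS : |Real.log (rbmS D r₀ n)| ≤
      |Real.log D| + Real.log 8 + Real.log (n:ℝ) + |Real.log (r₀/2)| := by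
    have h8 : (0:ℝ) ≤ Real.log 8 := Real.log_nonneg (by norm_num)
    have hlog8n : Real.log (D/(8*(n:ℝ))) = Real.log D - (Real.log 8 + Real.log (n:ℝ)) := by
      rw [Real.log_div hD.ne' (by positivity), Real.log_mul (by norm_num) hn0.ne']
    have h1 : |Real.log (D/(8*(n:ℝ)))| ≤ |Real.log D| + Real.log 8 + Real.log (n:ℝ) := by
      rw [hlog8n]
      have h2 := abs_sub (Real.log D) (Real.log 8 + Real.log (n:ℝ))
      rw [abs_of_nonneg (by linarith : (0:ℝ) ≤ Real.log 8 + Real.log (n:ℝ))] at h2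
      linarith
    unfold rbmS
    rw [hρ2]
    rcases min_cases (D/(8*(n:ℝ))) (r₀/2) with ⟨heq, -⟩ | ⟨heq, -⟩ <;> rw [heq]
    · have := abs_nonneg (Real.log (r₀/2)); linarith
    · have := abs_nonneg (Real.log D); linarith
  unfold rbmP rbmCP
  rw [hSg]
  have e1 : 4*(n:ℝ)*(Λ+1) ≤ 4*(Λ+1) * (n:ℝ)^(α+1) := by nlinarith
  have e2 : T * |Real.log (rbmS D r₀ n)| ≤
      T*(|Real.log D| + Real.log 8 + |Real.log (r₀/2)| + 1) * (n:ℝ)^(α+1) := by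
    have habs : 0 ≤ |Real.log D| + Real.log 8 + |Real.log (r₀/2)| := by positivity
    have e3 : |Real.log (rbmS D r₀ n)| ≤
        (|Real.log D| + Real.log 8 + |Real.log (r₀/2)| + 1) * (n:ℝ)^(α+1) := by
      calc |Real.log (rbmS D r₀ n)|
          ≤ |Real.log D| + Real.log 8 + Real.log (n:ℝ) + |Real.log (r₀/2)| := hlogS
        _ ≤ (|Real.log D| + Real.log 8 + |Real.log (r₀/2)|) * (n:ℝ)^(α+1)
              + 1 * (n:ℝ)^(α+1) := by nlinarith
        _ = (|Real.log D| + Real.log 8 + |Real.log (r₀/2)| + 1) * (n:ℝ)^(α+1) := by ring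
    calc T * |Real.log (rbmS D r₀ n)|
        ≤ T * ((|Real.log D| + Real.log 8 + |Real.log (r₀/2)| + 1) * (n:ℝ)^(α+1)) :=
          mul_le_mul_of_nonneg_left e3 hT.le
      _ = T*(|Real.log D| + Real.log 8 + |Real.log (r₀/2)| + 1) * (n:ℝ)^(α+1) := by ring
  nlinarith [hpow1, Real.rpow_nonneg (show (0:ℝ) ≤ 8/D by positivity) α]

include hα hD hr₀ hT hΛ in
lemma slowLog_rbmP : SlowLog (rbmP α D r₀ T Λ) := by
  refine slowLog_of_le (slowLog_mul (slowLog_const (rbmCP_pos (α := α) (r₀ := r₀) hD hT hΛ)) (slowLog_rpow (α+1))) ?_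
  filter_upwards [eventually_ge_atTop 1] with n hn
  exact ⟨rbmP_one_le hα hD hr₀ hT hΛ hn, rbmP_upper hα hD hr₀ hT hΛ hn⟩

include hα hD hr₀ hT hΛ hL in
lemma slowLog_rbmg : SlowLog (rbmg α D r₀ T Λ L) := by
  have hP := slowLog_rbmP hα hD hr₀ hT hΛ
  have hδ : SlowLog (rbmδ α D r₀ T Λ) := slowLog_rpow_comp hP (-1/α)
  have hε : SlowLog rbmε := slowLog_rpow (-(1/2))
  have hh : SlowLog (rbmh α D r₀ T Λ) :=
    slowLog_min (slowLog_div hε (slowLog_mul (slowLog_const (by positivity)) hP))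
      (slowLog_min (slowLog_const (by norm_num)) (slowLog_const (by positivity)))
  exact slowLog_min (slowLog_mul hδ hh)
    (slowLog_min (slowLog_div hε (slowLog_const (by linarith)))
      (slowLog_min (slowLog_const (by linarith)) (slowLog_const one_pos)))

lemma rbmε_tendsto : Tendsto rbmε atTop (nhds 0) := by
  have h := (tendsto_rpow_neg_atTop (by norm_num : (0:ℝ) < 1/2)).comp
    (tendsto_natCast_atTop_atTop (R := ℝ))
  exact h

include hα hD hr₀ hT hΛ hL in
lemma rbmM_tendsto :
    Tendsto (fun n : ℕ => rbmM α D r₀ T Λ L n ^ ((1:ℝ)/(n:ℝ))) atTop (nhds 1) := by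
  have hg := slowLog_rbmg hα hD hr₀ hT hΛ hL
  have hb : Tendsto (fun n : ℕ =>
      (3*((n:ℝ)*rbmε n) + T * |Real.log (rbmg α D r₀ T Λ L n)|) * ((1:ℝ)/(n:ℝ)))
      atTop (nhds 0) := by
    have h1 : Tendsto (fun n : ℕ => 3 * rbmε n) atTop (nhds 0) := by
      simpa using rbmε_tendsto.const_mul 3
    have h2 : Tendsto (fun n : ℕ => T * (|Real.log (rbmg α D r₀ T Λ L n)| / (n:ℝ)))
        atTop (nhds 0) := by
      simpa using (slowLog_tendsto hg).const_mul T
    have h3 := h1.add h2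
    rw [add_zero] at h3
    refine h3.congr' ?_
    filter_upwards [eventually_ge_atTop 1] with n hn
    have hn0 : ((n:ℝ)) ≠ 0 := by
      have : (1:ℝ) ≤ (n:ℝ) := by exact_mod_cast hn
      linarith
    field_simp
  have := (Real.continuous_exp.tendsto 0).comp hb
  rw [Real.exp_zero] at this
  refine this.congr (fun n => ?_)
  unfold rbmM
  rw [Real.rpow_def_of_pos (Real.exp_pos _), Real.log_exp]
  rfl

end asympt
open Real

-- exp t ≤ 1 + 2t for 0 ≤ t ≤ 1/2
lemma exp_le_one_add_two_mul {t : ℝ} (h0 : 0 ≤ t) (h1 : t ≤ 1/2) :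
    Real.exp t ≤ 1 + 2 * t := by
  have ht1 : (0:ℝ) < 1 - t := by linarith
  have h2 : 1 - t ≤ Real.exp (-t) := by
    have := Real.add_one_le_exp (-t); linarith
  have h3 : Real.exp t ≤ (1 - t)⁻¹ := by
    rw [Real.exp_neg] at h2
    rw [le_inv_comm₀ (Real.exp_pos t) ht1] at *
    · exact h2
  refine h3.trans ?_
  rw [inv_le_iff_one_le_mul₀ ht1]
  nlinarith

-- key per-term bound
lemma key_term {α ε P t t' h' : ℝ} (hα : 0 < α) (hε : 0 ≤ ε) (hP : 0 < P)
    (ht : 0 < t) (htP : t ^ (-α) ≤ P)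
    (hh0 : 0 ≤ h') (hh1 : h' ≤ ε / (4 * α * P)) (hh2 : h' ≤ 1/2) (hh3 : h' ≤ 1/(4*α))
    (ht' : (1 - h') * t ≤ t') :
    t' ^ (-α) ≤ t ^ (-α) + ε := by
  have h1h : (0:ℝ) < 1 - h' := by linarith
  have hbase : (0:ℝ) < (1 - h') * t := mul_pos h1h ht
  have step1 : t' ^ (-α) ≤ ((1 - h') * t) ^ (-α) :=
    Real.rpow_le_rpow_of_nonpos hbase ht' (by linarith)
  have step2 : ((1 - h') * t) ^ (-α) = (1 - h') ^ (-α) * t ^ (-α) :=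
    Real.mul_rpow h1h.le ht.le ▸ rfl
  have hlog : -Real.log (1 - h') ≤ 2 * h' := by
    have := Real.log_le_sub_one_of_pos (x := (1 - h')⁻¹) (by positivity)
    rw [Real.log_inv] at this
    have : -Real.log (1 - h') ≤ (1 - h')⁻¹ - 1 := this
    have hinv : (1 - h')⁻¹ - 1 = h' / (1 - h') := by field_simp; ring
    rw [hinv] at this
    refine this.trans ?_
    rw [div_le_iff₀ h1h]; nlinarith
  have step3 : (1 - h') ^ (-α) ≤ 1 + 4 * α * h' := by
    rw [Real.rpow_def_of_pos h1h]
    have e1 : Real.log (1 - h') * (-α) ≤ 2 * α * h' := by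
      have := mul_le_mul_of_nonneg_left hlog hα.le
      nlinarith
    have e2 : Real.exp (Real.log (1 - h') * (-α)) ≤ Real.exp (2 * α * h') :=
      Real.exp_le_exp.mpr e1
    refine e2.trans ?_
    have h2αh : 2 * α * h' ≤ 1/2 := by
      have := mul_le_mul_of_nonneg_left hh3 (by positivity : (0:ℝ) ≤ 2*α)
      calc 2 * α * h' ≤ 2 * α * (1/(4*α)) := by nlinarith
        _ = 1/2 := by field_simp; ring
    have := exp_le_one_add_two_mul (by positivity : (0:ℝ) ≤ 2*α*h') h2αh
    linarith
  have htnn : 0 ≤ t ^ (-α) := Real.rpow_nonneg ht.le _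
  calc t' ^ (-α) ≤ (1 - h') ^ (-α) * t ^ (-α) := by rw [← step2]; exact step1
    _ ≤ (1 + 4*α*h') * t ^ (-α) := mul_le_mul_of_nonneg_right step3 htnn
    _ = t ^ (-α) + 4*α*h' * t ^ (-α) := by ring
    _ ≤ t ^ (-α) + 4*α*h' * P := by
        have := mul_le_mul_of_nonneg_left htP (by positivity : (0:ℝ) ≤ 4*α*h')
        linarith
    _ ≤ t ^ (-α) + 4*α*(ε / (4*α*P)) * P := by
        have h4 : (0:ℝ) ≤ 4*α*P := by positivity
        have := mul_le_mul_of_nonneg_right (mul_le_mul_of_nonneg_left hh1 (by positivity : (0:ℝ) ≤ 4*α)) hP.le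
        linarith
    _ = t ^ (-α) + ε := by field_simp
open MeasureTheory
open scoped RealInnerProductSpace

lemma exists_far_point {E : Type*} [NormedAddCommGroup E] [InnerProductSpace ℝ E]
    [MeasurableSpace E] [BorelSpace E]
    {C : Set E} (hC : IsPreconnected C) {a b : E} (ha : a ∈ C) (hb : b ∈ C)
    {k : ℕ} (x : Fin k → E) {s : ℝ} (hs : 0 < s) (hcard : 2 * k * s < ‖a - b‖) :
    ∃ z ∈ C, ∀ j, s ≤ ‖z - x j‖ := by
  by_contra hcon
  push_neg at hcon
  have hD : 0 < ‖a - b‖ := lt_of_le_of_lt (by positivity) hcard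
  set u : E := ‖a - b‖⁻¹ • (a - b) with hu
  have hunorm : ‖u‖ = 1 := by
    rw [hu, norm_smul, norm_inv, norm_norm, inv_mul_cancel₀ hD.ne']
  set φ : E → ℝ := fun y => ⟪u, y⟫ with hφ
  have hφc : Continuous φ := continuous_const.inner continuous_id
  have hφab : φ a - φ b = ‖a - b‖ := by
    have : φ a - φ b = ⟪u, a - b⟫ := by simp [hφ, inner_sub_right]
    rw [this, hu, real_inner_smul_left, real_inner_self_eq_norm_mul_norm]
    field_simp
  have himg : IsPreconnected (φ '' C) := hC.image φ hφc.continuousOn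
  have hIcc : Set.Icc (φ b) (φ a) ⊆ φ '' C :=
    himg.Icc_subset ⟨b, hb, rfl⟩ ⟨a, ha, rfl⟩
  have hcover : φ '' C ⊆ ⋃ j, Set.Ioo (φ (x j) - s) (φ (x j) + s) := by
    rintro - ⟨c, hc, rfl⟩
    obtain ⟨j, hj⟩ := hcon c hc
    refine Set.mem_iUnion.mpr ⟨j, ?_⟩
    have : |φ c - φ (x j)| < s := by
      have h1 : φ c - φ (x j) = ⟪u, c - x j⟫ := by simp [hφ, inner_sub_right]
      rw [h1]
      calc |⟪u, c - x j⟫| ≤ ‖u‖ * ‖c - x j‖ := abs_real_inner_le_norm u _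
        _ = ‖c - x j‖ := by rw [hunorm, one_mul]
        _ < s := hj
    rw [abs_lt] at this
    constructor <;> linarith [this.1, this.2]
  have hvol : ENNReal.ofReal ‖a - b‖ ≤ (k : ENNReal) * ENNReal.ofReal (2 * s) := by
    calc ENNReal.ofReal ‖a - b‖ = volume (Set.Icc (φ b) (φ a)) := by
          rw [Real.volume_Icc]; congr 1; linarith [hφab]
      _ ≤ volume (⋃ j, Set.Ioo (φ (x j) - s) (φ (x j) + s)) :=
          measure_mono (hIcc.trans hcover)
      _ ≤ ∑ j : Fin k, volume (Set.Ioo (φ (x j) - s) (φ (x j) + s)) :=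
          measure_iUnion_fintype_le _ _
      _ = (k : ENNReal) * ENNReal.ofReal (2 * s) := by
          simp [Real.volume_Ioo, Finset.sum_const]
          congr 1; ring_nf
          rw [ENNReal.ofReal_mul' (by norm_num : (0:ℝ) ≤ 2)]; simp
  have : ‖a - b‖ ≤ 2 * k * s := by
    rw [show ((k : ENNReal)) = ENNReal.ofReal (k : ℝ) by simp,
      ← ENNReal.ofReal_mul (by positivity)] at hvol
    have := (ENNReal.ofReal_le_ofReal_iff (by positivity)).mp hvol
    linarith [this]
  linarith
open Metric

lemma exists_continuum {m : ℕ} (hm : 1 ≤ m) {M : Type} [TopologicalSpace M]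
    [ChartedSpace (EuclideanSpace ℝ (Fin m)) M] [Nonempty M]
    {E' : Type*} [TopologicalSpace E'] (g : M → E') (hgc : Continuous g)
    (hginj : Function.Injective g) :
    ∃ C : Set E', C ⊆ Set.range g ∧ IsPreconnected C ∧
      ∃ a b, a ∈ C ∧ b ∈ C ∧ a ≠ b := by
  obtain ⟨p⟩ := ‹Nonempty M›
  set e := chartAt (EuclideanSpace ℝ (Fin m)) p with he
  have hsrc : p ∈ e.source := mem_chart_source _ p
  have htgt : e p ∈ e.target := e.map_source hsrc
  obtain ⟨ρ, hρ, hball⟩ := Metric.isOpen_iff.mp e.open_target _ htgt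
  set v : EuclideanSpace ℝ (Fin m) :=
    EuclideanSpace.single (⟨0, by omega⟩ : Fin m) (ρ/2) with hv
  have hvnorm : ‖v‖ = ρ/2 := by
    rw [hv, EuclideanSpace.norm_single, Real.norm_eq_abs, abs_of_pos (by linarith : (0:ℝ) < ρ/2)]
  set A := e p with hA
  set B := e p + v with hB
  have hAb : A ∈ ball (e p) ρ := mem_ball_self hρ
  have hBb : B ∈ ball (e p) ρ := by
    rw [mem_ball, hB, dist_eq_norm]
    simp only [add_sub_cancel_left]
    rw [hvnorm]; linarith
  have hseg : segment ℝ A B ⊆ ball (e p) ρ :=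
    (convex_ball _ _).segment_subset hAb hBb
  have hsegt : segment ℝ A B ⊆ e.target := hseg.trans hball
  have hABne : A ≠ B := by
    rw [hA, hB]
    intro h
    have : v = 0 := by
      have := congrArg (· - e p) h
      simpa using this.symm
    rw [this] at hvnorm
    simp at hvnorm
    linarith
  set C₀ := e.symm '' (segment ℝ A B) with hC₀
  have hC₀pre : IsPreconnected C₀ :=
    (convex_segment A B).isPreconnected.image _
      (e.continuousOn_symm.mono hsegt)
  have hC₀src : C₀ ⊆ e.source := by
    rintro - ⟨w, hw, rfl⟩
    exact e.map_target (hsegt hw)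
  have haM : e.symm A ∈ C₀ := ⟨A, left_mem_segment ℝ A B, rfl⟩
  have hbM : e.symm B ∈ C₀ := ⟨B, right_mem_segment ℝ A B, rfl⟩
  have habM : e.symm A ≠ e.symm B := by
    intro h
    apply hABne
    have h1 : e (e.symm A) = A := e.right_inv (hsegt (left_mem_segment ℝ A B))
    have h2 : e (e.symm B) = B := e.right_inv (hsegt (right_mem_segment ℝ A B))
    rw [← h1, ← h2, h]
  refine ⟨g '' C₀, ?_, hC₀pre.image _ hgc.continuousOn, g (e.symm A), g (e.symm B),
    ⟨_, haM, rfl⟩, ⟨_, hbM, rfl⟩, fun h => habM (hginj h)⟩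
  exact Set.image_subset_range g C₀ |>.trans (le_refl _)
open MeasureTheory

lemma integrableOn_of_bounded' {X : Type*} [MeasurableSpace X] (μ : Measure X)
    [IsFiniteMeasure μ] {K : Set X} (hKm : MeasurableSet K)
    {f : X → ℝ} (hfm : Measurable f) (hnn : ∀ w, 0 ≤ f w)
    {Cb : ℝ} (hCb : ∀ w ∈ K, f w ≤ Cb) : IntegrableOn f K μ := by
  refine Integrable.mono' (integrable_const Cb) hfm.aestronglyMeasurable ?_
  filter_upwards [ae_restrict_mem hKm] with w hw
  rw [Real.norm_eq_abs, abs_of_nonneg (hnn w)]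
  exact hCb w hw

lemma int_lower {X : Type*} [MeasurableSpace X] (μ : Measure X) [IsFiniteMeasure μ]
    {K B : Set X} (hKm : MeasurableSet K) (hBm : MeasurableSet B) (hμK : μ Kᶜ = 0)
    {f : X → ℝ} (hfm : Measurable f) (hnn : ∀ w, 0 ≤ f w)
    {Cb : ℝ} (hCb : ∀ w ∈ K, f w ≤ Cb)
    {c : ℝ} (hfB : ∀ w ∈ B ∩ K, c ≤ f w) :
    c * (μ B).toReal ≤ ∫ w in K, f w ∂μ := by
  have hint : IntegrableOn f K μ := integrableOn_of_bounded' μ hKm hfm hnn hCb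
  have h2 : μ (B \ K) = 0 := measure_mono_null (fun w hw => hw.2) hμK
  have hBK : μ B = μ (B ∩ K) := by
    rw [← measure_inter_add_diff B hKm, h2, add_zero]
  have h3 : c * (μ (B ∩ K)).toReal ≤ ∫ w in B ∩ K, f w ∂μ := by
    have := setIntegral_ge_of_const_le_real (hBm.inter hKm) (measure_ne_top μ _) hfB
      (hint.mono_set Set.inter_subset_right)
    exact this
  have h4 : ∫ w in B ∩ K, f w ∂μ ≤ ∫ w in K, f w ∂μ :=
    setIntegral_mono_set hint (Filter.Eventually.of_forall hnn)
      (HasSubset.Subset.eventuallyLE Set.inter_subset_right)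
  calc c * (μ B).toReal = c * (μ (B ∩ K)).toReal := by rw [hBK]
    _ ≤ _ := h3.trans h4


set_option maxHeartbeats 1000000

/-- Bernstein–Markov-type inequality on the Riesz classes `P_n^Q`:
if `K ⊂ ℝ^d` is a compact smooth `m`-dimensional embedded submanifold (image of a smooth
embedding `g` of a compact smooth `m`-manifold `M`), `Q` is `C¹`, and `μ` is a finite
measure on `K` satisfying the mass density condition `μ(B(x,r)) ≥ r^T` for `x ∈ K`,
`0 < r < r₀`, then there are constants `M_n > 0` with `M_n^{1/n} → 1` such that
`sup_K f ≤ M_n ∫_K f dμ` for every `f ∈ P_n^Q`. -/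
theorem riesz_bernstein_markov {d m : ℕ} (hd : 2 ≤ d) (α : ℝ) (hα : 0 < α)
    (hαd : α ≤ (d : ℝ)) (hm : 1 ≤ m) (hmd : m ≤ d)
    (K : Set (EuclideanSpace ℝ (Fin d)))
    (M : Type) [TopologicalSpace M] [ChartedSpace (EuclideanSpace ℝ (Fin m)) M]
    [IsManifold (𝓡 m) (⊤ : ℕ∞) M] [CompactSpace M]
    (g : M → EuclideanSpace ℝ (Fin d))
    (hg : ContMDiff (𝓡 m) 𝓘(ℝ, EuclideanSpace ℝ (Fin d)) (⊤ : ℕ∞) g)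
    (hemb : Topology.IsEmbedding g)
    (himm : ∀ p : M, Function.Injective (mfderiv (𝓡 m) 𝓘(ℝ, EuclideanSpace ℝ (Fin d)) g p))
    (hK : K = Set.range g)
    (Q : EuclideanSpace ℝ (Fin d) → ℝ) (hQ : ContDiff ℝ 1 Q)
    (μ : Measure (EuclideanSpace ℝ (Fin d))) [IsFiniteMeasure μ] (hμK : μ Kᶜ = 0)
    (r₀ T : ℝ) (hr₀ : 0 < r₀) (hT : 0 < T)
    (hmass : ∀ x ∈ K, ∀ r : ℝ, 0 < r → r < r₀ →
      ENNReal.ofReal (r ^ T) ≤ μ (Metric.ball x r)) :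
    ∃ Mn : ℕ → ℝ, (∀ n, 0 < Mn n) ∧
      Tendsto (fun n : ℕ => Mn n ^ ((1 : ℝ) / (n : ℝ))) atTop (nhds 1) ∧
      ∀ n : ℕ, 2 ≤ n → ∀ x : Fin (n - 1) → EuclideanSpace ℝ (Fin d),
        (∀ j, x j ∈ K) → ∀ y ∈ K,
          rieszF α n Q x y ≤ Mn n * ∫ w in K, rieszF α n Q x w ∂μ := by
  classical
  rcases isEmpty_or_nonempty M with hME | hME
  · refine ⟨fun _ => 1, fun _ => one_pos, ?_, ?_⟩
    · have : (fun n : ℕ => (1:ℝ) ^ ((1:ℝ)/(n:ℝ))) = fun _ => (1:ℝ) := by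
        funext n; exact Real.one_rpow _
      rw [this]; exact tendsto_const_nhds
    · intro n hn x hx y hy
      rw [hK] at hy
      obtain ⟨p, -⟩ := hy
      exact (hME.false p).elim
  -- main case
  have hgc : Continuous g := hg.continuous
  have hKc : IsCompact K := hK ▸ isCompact_range hgc
  have hKm : MeasurableSet K := hKc.isClosed.measurableSet
  -- bound for Q on K
  obtain ⟨Λ₀, hΛ₀⟩ := hKc.exists_bound_of_continuousOn hQ.continuous.continuousOn
  set Λ : ℝ := max Λ₀ 0 with hΛdef
  have hΛ : ∀ w ∈ K, |Q w| ≤ Λ := fun w hw =>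
    le_trans (by simpa using hΛ₀ w hw) (le_max_left _ _)
  have hΛ0 : (0:ℝ) ≤ Λ := le_max_right _ _
  -- K inside a ball
  obtain ⟨R, hR⟩ := hKc.isBounded.subset_closedBall (0 : EuclideanSpace ℝ (Fin d))
  have hR0 : (0:ℝ) ≤ R := by
    obtain ⟨p⟩ := hME
    have : g p ∈ K := hK ▸ Set.mem_range_self p
    have := hR this
    simp only [Metric.mem_closedBall] at this
    exact le_trans dist_nonneg this
  -- Lipschitz bound for Q on closedBall 0 (R+1)
  obtain ⟨L, hL0, hLip⟩ : ∃ L : ℝ, 0 ≤ L ∧ ∀ y' ∈ closedBall (0 : EuclideanSpace ℝ (Fin d)) (R+1),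
      ∀ w' ∈ closedBall (0 : EuclideanSpace ℝ (Fin d)) (R+1), |Q w' - Q y'| ≤ L * ‖w' - y'‖ := by
    have hconv : Convex ℝ (closedBall (0 : EuclideanSpace ℝ (Fin d)) (R+1)) :=
      convex_closedBall _ _
    have hcomp : IsCompact (closedBall (0 : EuclideanSpace ℝ (Fin d)) (R+1)) :=
      isCompact_closedBall _ _
    have hder : Continuous fun w => fderiv ℝ Q w := hQ.continuous_fderiv one_ne_zero
    obtain ⟨L₀, hL₀⟩ := hcomp.exists_bound_of_continuousOn hder.continuousOn
    refine ⟨max L₀ 0, le_max_right _ _, ?_⟩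
    intro y' hy' w' hw'
    have hdiff : ∀ z ∈ closedBall (0 : EuclideanSpace ℝ (Fin d)) (R+1),
        DifferentiableAt ℝ Q z := fun z _ => hQ.differentiable one_ne_zero z
    have hb := hconv.norm_image_sub_le_of_norm_fderiv_le hdiff
      (fun z hz => le_trans (hL₀ z hz) (le_max_left L₀ (0:ℝ))) hy' hw'
    simpa [Real.norm_eq_abs] using hb
  -- continuum in K
  obtain ⟨Cs, hCsub, hCpre, a, b, haC, hbC, hab⟩ :=
    exists_continuum hm g hgc hemb.injective
  have hCsubK : Cs ⊆ K := hK ▸ hCsub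
  set D : ℝ := ‖a - b‖ with hDdef
  have hD : 0 < D := by
    rw [hDdef, norm_pos_iff, sub_ne_zero]; exact hab
  refine ⟨rbmM α D r₀ T Λ L, fun n => rbmM_pos, rbmM_tendsto hα hD hr₀ hT hΛ0 hL0, ?_⟩
  intro n hn x hx y hyK
  have hn1 : 1 ≤ n := le_trans (by norm_num) hn
  have hnR1 : (1:ℝ) ≤ (n:ℝ) := by exact_mod_cast hn1
  have hnR2 : (2:ℝ) ≤ (n:ℝ) := by exact_mod_cast hn
  set f : EuclideanSpace ℝ (Fin d) → ℝ := rieszF α n Q x with hfdef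
  have hfnn : ∀ w, 0 ≤ f w := by
    intro w
    rw [hfdef, rieszF]
    split
    · exact le_refl 0
    · exact (Real.exp_pos _).le
  have hfm : Measurable f := by
    rw [hfdef]
    unfold rieszF
    refine Measurable.ite ((Set.finite_range x).measurableSet) measurable_const ?_
    apply Measurable.exp
    apply Measurable.sub
    · apply Measurable.neg
      apply Finset.measurable_sum
      intro j _
      exact ((continuous_id.sub continuous_const).norm.measurable).pow measurable_const
    · exact (measurable_const.mul hQ.continuous.measurable)
  have hfbdd : ∀ w ∈ K, f w ≤ Real.exp (2*(n:ℝ)*Λ) := by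
    intro w hw
    rw [hfdef, rieszF]
    split
    · exact (Real.exp_pos _).le
    · apply Real.exp_le_exp.mpr
      have h1 : (0:ℝ) ≤ ∑ j, ‖w - x j‖ ^ (-α) :=
        Finset.sum_nonneg fun j _ => Real.rpow_nonneg (norm_nonneg _) _
      have h2 : -Q w ≤ Λ := by have := hΛ w hw; have := neg_le_abs (Q w); linarith
      have h3 : 2*(n:ℝ)*(-Q w) ≤ 2*(n:ℝ)*Λ :=
        mul_le_mul_of_nonneg_left h2 (by positivity)
      nlinarith
  set I : ℝ := ∫ w in K, f w ∂μ with hIdef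
  have hI0 : 0 ≤ I := setIntegral_nonneg hKm fun w _ => hfnn w
  by_cases hyx : y ∈ Set.range x
  · have : f y = 0 := by rw [hfdef, rieszF, if_pos hyx]
    rw [this]
    exact mul_nonneg rbmM_pos.le hI0
  have hfy : f y = Real.exp (-(∑ j, ‖y - x j‖ ^ (-α)) - 2*(n:ℝ)*Q y) := by
    rw [hfdef, rieszF, if_neg hyx]
  have htpos : ∀ j, 0 < ‖y - x j‖ := by
    intro j
    rw [norm_pos_iff, sub_ne_zero]
    exact fun h => hyx ⟨j, h.symm⟩
  -- notation for the n-dependent quantities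
  have hPpos := rbmP_pos (α := α) (D := D) (r₀ := r₀) (T := T) (Λ := Λ) hα hD hr₀ hT hΛ0 hn1
  have hδpos := rbmδ_pos (α := α) (D := D) (r₀ := r₀) (T := T) (Λ := Λ) hα hD hr₀ hT hΛ0 hn1
  have hδP := rbmδ_rpow (α := α) (D := D) (r₀ := r₀) (T := T) (Λ := Λ) hα hD hr₀ hT hΛ0 hn1
  have hεpos := rbmε_pos (n := n) hn1
  have hhpos := rbmh_pos (α := α) (D := D) (r₀ := r₀) (T := T) (Λ := Λ) hα hD hr₀ hT hΛ0 hn1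
  have hgrpos := rbmg_pos (α := α) (D := D) (r₀ := r₀) (T := T) (Λ := Λ) (L := L) hα hD hr₀ hT hΛ0 hL0 hn1
  have hgrlt := rbmg_lt (α := α) (D := D) (T := T) (Λ := Λ) (L := L) (n := n) hr₀
  have hgrle1 := rbmg_le_one (α := α) (D := D) (r₀ := r₀) (T := T) (Λ := Λ) (L := L) (n := n)
  by_cases hcase : ∀ j, rbmδ α D r₀ T Λ n ≤ ‖y - x j‖
  · -- Case B : y is far from all the points
    set εn := rbmε n with hεndef
    set grn := rbmg α D r₀ T Λ L n with hgrndef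
    set δn := rbmδ α D r₀ T Λ n with hδndef
    set hnn := rbmh α D r₀ T Λ n with hnndef
    have hε0' : (0:ℝ) ≤ εn := rbmε_nonneg
    have hball : ∀ w ∈ ball y grn ∩ K, f y * Real.exp (-(3*((n:ℝ)*εn))) ≤ f w := by
      intro w hw
      obtain ⟨hwB, hwK⟩ := hw
      have hwy : ‖w - y‖ < grn := by
        rw [mem_ball, dist_eq_norm] at hwB; exact hwB
      have hwt : ∀ j, (1 - hnn) * ‖y - x j‖ ≤ ‖w - x j‖ := by
        intro j
        have h2 : grn ≤ δn * hnn := rbmg_le_dh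
        have h3 : δn * hnn ≤ ‖y - x j‖ * hnn :=
          mul_le_mul_of_nonneg_right (hcase j) hhpos.le
        have h4 : ‖y - x j‖ ≤ ‖y - w‖ + ‖w - x j‖ := by
          have := dist_triangle y w (x j); simpa [dist_eq_norm] using this
        have h5 : ‖y - w‖ = ‖w - y‖ := norm_sub_rev _ _
        nlinarith
      have hh2 : hnn ≤ 1/2 := le_trans (min_le_right _ _) (min_le_left _ _)
      have hwx : w ∉ Set.range x := by
        rintro ⟨j, rfl⟩
        have h1 := hwt j
        rw [sub_self, norm_zero] at h1
        nlinarith [htpos j, hhpos, hcase j]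
      have hfw : f w = Real.exp (-(∑ j, ‖w - x j‖ ^ (-α)) - 2*(n:ℝ)*Q w) := by
        rw [hfdef, rieszF, if_neg hwx]
      have hsum : (∑ j, ‖w - x j‖ ^ (-α)) ≤ (∑ j, ‖y - x j‖ ^ (-α)) + (n:ℝ)*εn := by
        have hterm : ∀ j, ‖w - x j‖ ^ (-α) ≤ ‖y - x j‖ ^ (-α) + εn := by
          intro j
          refine key_term hα rbmε_nonneg hPpos (htpos j) ?_ hhpos.le ?_ hh2 ?_ (hwt j)
          · calc ‖y - x j‖ ^ (-α) ≤ δn ^ (-α) :=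
                Real.rpow_le_rpow_of_nonpos hδpos (hcase j) (by linarith)
              _ = rbmP α D r₀ T Λ n := hδP
          · exact min_le_left _ _
          · exact le_trans (min_le_right _ _) (min_le_right _ _)
        have hcard : ((n-1 : ℕ):ℝ) ≤ (n:ℝ) := by exact_mod_cast Nat.sub_le n 1
        have hε0 : 0 ≤ εn := rbmε_nonneg
        calc (∑ j, ‖w - x j‖ ^ (-α)) ≤ ∑ j, (‖y - x j‖ ^ (-α) + εn) :=
              Finset.sum_le_sum fun j _ => hterm j
          _ = (∑ j, ‖y - x j‖ ^ (-α)) + ((n-1 : ℕ):ℝ) * εn := by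
              rw [Finset.sum_add_distrib, Finset.sum_const, Finset.card_univ]
              simp [nsmul_eq_mul]
          _ ≤ (∑ j, ‖y - x j‖ ^ (-α)) + (n:ℝ)*εn := by
              have := mul_le_mul_of_nonneg_right hcard hε0
              linarith
      have hyB : y ∈ closedBall (0 : EuclideanSpace ℝ (Fin d)) (R+1) := by
        have := hR hyK
        rw [Metric.mem_closedBall] at this ⊢
        linarith
      have hwB2 : w ∈ closedBall (0 : EuclideanSpace ℝ (Fin d)) (R+1) := by
        rw [Metric.mem_closedBall, dist_eq_norm, sub_zero]
        have h6 : ‖w‖ ≤ ‖w - y‖ + ‖y‖ := by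
          have := norm_add_le (w - y) y; simpa using this
        have h7 : ‖y‖ ≤ R := by
          have hh := hR hyK
          rw [Metric.mem_closedBall, dist_eq_norm, sub_zero] at hh
          exact hh
        have h8 : grn ≤ 1 := hgrle1
        linarith [hwy]
      have hQw : Q w ≤ Q y + εn := by
        have h6 := hLip y hyB w hwB2
        have h7 : ‖w - y‖ ≤ εn/(L+1) := le_trans hwy.le rbmg_le_εL
        have h8 : L * ‖w - y‖ ≤ εn := by
          have hL1 : (0:ℝ) < L + 1 := by linarith
          have hd0 : 0 ≤ εn/(L+1) := div_nonneg hε0' hL1.le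
          calc L * ‖w - y‖ ≤ L * (εn/(L+1)) := mul_le_mul_of_nonneg_left h7 hL0
            _ ≤ (L+1) * (εn/(L+1)) := mul_le_mul_of_nonneg_right (by linarith) hd0
            _ = εn := by field_simp
        have h9 := le_abs_self (Q w - Q y)
        linarith
      rw [hfw, hfy, ← Real.exp_add]
      apply Real.exp_le_exp.mpr
      have h10 := mul_le_mul_of_nonneg_left hQw (by positivity : (0:ℝ) ≤ 2*(n:ℝ))
      have h11 : 2*(n:ℝ)*Q w ≤ 2*(n:ℝ)*Q y + 2*(n:ℝ)*εn := by
        have : 2*(n:ℝ)*(Q y + εn) = 2*(n:ℝ)*Q y + 2*(n:ℝ)*εn := by ring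
        linarith [h10, this.le]
      linarith
    have hmass' : grn ^ T ≤ (μ (ball y grn)).toReal :=
      (ENNReal.ofReal_le_iff_le_toReal (measure_ne_top μ _)).mp (hmass y hyK grn hgrpos hgrlt)
    have hint := int_lower μ hKm measurableSet_ball hμK hfm hfnn hfbdd hball
    have hc0 : 0 ≤ f y * Real.exp (-(3*((n:ℝ)*εn))) := mul_nonneg (hfnn y) (Real.exp_pos _).le
    have hfyq : f y * (Real.exp (-(3*((n:ℝ)*εn))) * grn ^ T) ≤ I := by
      calc f y * (Real.exp (-(3*((n:ℝ)*εn))) * grn ^ T)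
          = (f y * Real.exp (-(3*((n:ℝ)*εn)))) * grn ^ T := by ring
        _ ≤ (f y * Real.exp (-(3*((n:ℝ)*εn)))) * (μ (ball y grn)).toReal :=
            mul_le_mul_of_nonneg_left hmass' hc0
        _ ≤ I := hint
    have hqpos : 0 < Real.exp (-(3*((n:ℝ)*εn))) * grn ^ T := by
      have := Real.rpow_pos_of_pos hgrpos T
      positivity
    have hq : (Real.exp (-(3*((n:ℝ)*εn))) * grn ^ T)⁻¹ ≤ rbmM α D r₀ T Λ L n := by
      have hM : rbmM α D r₀ T Λ L n = Real.exp (3*((n:ℝ)*εn) + T * |Real.log grn|) := rfl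
      rw [Real.rpow_def_of_pos hgrpos, ← Real.exp_add, ← Real.exp_neg, hM]
      apply Real.exp_le_exp.mpr
      have h9 : -(Real.log grn * T) ≤ T * |Real.log grn| := by
        have h11 := neg_le_abs (Real.log grn)
        nlinarith [hT.le, abs_nonneg (Real.log grn)]
      linarith
    calc f y ≤ I * (Real.exp (-(3*((n:ℝ)*εn))) * grn ^ T)⁻¹ := by
          rw [← div_eq_mul_inv]
          exact (le_div_iff₀ hqpos).mpr hfyq
      _ ≤ I * rbmM α D r₀ T Λ L n := mul_le_mul_of_nonneg_left hq hI0
      _ = rbmM α D r₀ T Λ L n * I := mul_comm _ _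
  · -- Case A : y is near one of the points
    push_neg at hcase
    obtain ⟨j₀, hj₀⟩ := hcase
    have hρpos' : 0 < rbmρ D n := rbmρ_pos hD hn1
    have hcard : 2 * ((n-1 : ℕ):ℝ) * rbmρ D n < ‖a - b‖ := by
      have hcast : ((n-1:ℕ):ℝ) = (n:ℝ) - 1 := by
        rw [Nat.cast_sub hn1]; norm_num
      rw [hcast, ← hDdef]
      show 2 * ((n:ℝ)-1) * (D/(4*(n:ℝ))) < D
      have hne : (0:ℝ) < (n:ℝ) := by linarith
      have heq : 2*((n:ℝ)-1)*(D/(4*(n:ℝ))) = D * (((n:ℝ)-1)/(2*(n:ℝ))) := by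
        field_simp; ring
      have hfrac : ((n:ℝ)-1)/(2*(n:ℝ)) < 1 := (div_lt_one (by linarith)).mpr (by linarith)
      calc 2*((n:ℝ)-1)*(D/(4*(n:ℝ))) = D * (((n:ℝ)-1)/(2*(n:ℝ))) := heq
        _ < D * 1 := mul_lt_mul_of_pos_left hfrac hD
        _ = D := mul_one D
    obtain ⟨z, hzC, hzfar⟩ := exists_far_point hCpre haC hbC x hρpos' hcard
    have hzK : z ∈ K := hCsubK hzC
    have hsrpos : 0 < rbmS D r₀ n := rbmS_pos hD hr₀ hn1
    have hsrlt : rbmS D r₀ n < r₀ := rbmS_lt hr₀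
    have hsrle : rbmS D r₀ n ≤ rbmρ D n / 2 := rbmS_le
    have hfar : ∀ w ∈ ball z (rbmS D r₀ n) ∩ K,
        Real.exp (-(rbmSg α D n) - 2*(n:ℝ)*Λ) ≤ f w := by
      intro w hw
      obtain ⟨hwB, hwK⟩ := hw
      have hwz : ‖w - z‖ < rbmS D r₀ n := by
        rw [mem_ball, dist_eq_norm] at hwB; exact hwB
      have hwfar : ∀ j, rbmρ D n / 2 ≤ ‖w - x j‖ := by
        intro j
        have h1 := hzfar j
        have h2 : ‖z - x j‖ ≤ ‖z - w‖ + ‖w - x j‖ := by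
          have := dist_triangle z w (x j); simpa [dist_eq_norm] using this
        have h3 : ‖z - w‖ = ‖w - z‖ := norm_sub_rev _ _
        linarith
      have hwx : w ∉ Set.range x := by
        rintro ⟨j, rfl⟩
        have h1 := hwfar j
        rw [sub_self, norm_zero] at h1
        linarith
      have hfw : f w = Real.exp (-(∑ j, ‖w - x j‖ ^ (-α)) - 2*(n:ℝ)*Q w) := by
        rw [hfdef, rieszF, if_neg hwx]
      rw [hfw]
      apply Real.exp_le_exp.mpr
      have hsum : (∑ j, ‖w - x j‖ ^ (-α)) ≤ rbmSg α D n := by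
        have hterm : ∀ j, ‖w - x j‖ ^ (-α) ≤ (rbmρ D n / 2) ^ (-α) := fun j =>
          Real.rpow_le_rpow_of_nonpos (by linarith) (hwfar j) (by linarith)
        have hcard : ((n-1 : ℕ):ℝ) ≤ (n:ℝ) := by exact_mod_cast Nat.sub_le n 1
        have hrnn : (0:ℝ) ≤ (rbmρ D n / 2) ^ (-α) := Real.rpow_nonneg (by linarith) _
        calc (∑ j, ‖w - x j‖ ^ (-α)) ≤ ∑ _j : Fin (n-1), (rbmρ D n / 2) ^ (-α) :=
              Finset.sum_le_sum fun j _ => hterm j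
          _ = ((n-1 : ℕ):ℝ) * (rbmρ D n / 2) ^ (-α) := by
              rw [Finset.sum_const, Finset.card_univ]; simp [nsmul_eq_mul]
          _ ≤ (n:ℝ) * (rbmρ D n / 2) ^ (-α) := by
              have := mul_le_mul_of_nonneg_right hcard hrnn
              linarith
          _ = rbmSg α D n := rfl
      have hQw : Q w ≤ Λ := le_trans (le_abs_self _) (hΛ w hwK)
      have h4 := mul_le_mul_of_nonneg_left hQw (by positivity : (0:ℝ) ≤ 2*(n:ℝ))
      linarith
    have hmass' : rbmS D r₀ n ^ T ≤ (μ (ball z (rbmS D r₀ n))).toReal :=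
      (ENNReal.ofReal_le_iff_le_toReal (measure_ne_top μ _)).mp
        (hmass z hzK _ hsrpos hsrlt)
    have hint := int_lower μ hKm measurableSet_ball hμK hfm hfnn hfbdd hfar
    have hIlow : Real.exp (-(rbmSg α D n) - 2*(n:ℝ)*Λ) * rbmS D r₀ n ^ T ≤ I := by
      calc Real.exp (-(rbmSg α D n) - 2*(n:ℝ)*Λ) * rbmS D r₀ n ^ T
          ≤ Real.exp (-(rbmSg α D n) - 2*(n:ℝ)*Λ) * (μ (ball z (rbmS D r₀ n))).toReal :=
            mul_le_mul_of_nonneg_left hmass' (Real.exp_pos _).le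
        _ ≤ I := hint
    have hfyA : f y ≤ Real.exp (-(rbmP α D r₀ T Λ n) + 2*(n:ℝ)*Λ) := by
      rw [hfy]
      apply Real.exp_le_exp.mpr
      have hS1 : ‖y - x j₀‖ ^ (-α) ≤ ∑ j, ‖y - x j‖ ^ (-α) :=
        Finset.single_le_sum (f := fun j => ‖y - x j‖ ^ (-α))
          (fun j _ => Real.rpow_nonneg (norm_nonneg _) _) (Finset.mem_univ j₀)
      have hS2 : rbmP α D r₀ T Λ n ≤ ‖y - x j₀‖ ^ (-α) := by
        rw [← hδP]
        exact Real.rpow_le_rpow_of_nonpos (htpos j₀) hj₀.le (by linarith)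
      have hQy : -Q y ≤ Λ := by
        have := hΛ y hyK; have := neg_le_abs (Q y); linarith
      have h4 : -(2*(n:ℝ)*Q y) ≤ 2*(n:ℝ)*Λ := by nlinarith
      linarith
    have hA2 : Real.exp (-(rbmP α D r₀ T Λ n) + 2*(n:ℝ)*Λ) ≤
        Real.exp (-(rbmSg α D n) - 2*(n:ℝ)*Λ) * rbmS D r₀ n ^ T := by
      rw [Real.rpow_def_of_pos hsrpos, ← Real.exp_add]
      apply Real.exp_le_exp.mpr
      have habs : -|Real.log (rbmS D r₀ n)| ≤ Real.log (rbmS D r₀ n) :=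
        neg_abs_le _
      have hTabs : 0 ≤ T * (|Real.log (rbmS D r₀ n)| + Real.log (rbmS D r₀ n)) := by
        nlinarith [hT.le]
      show -(rbmP α D r₀ T Λ n) + 2*(n:ℝ)*Λ ≤
        -(rbmSg α D n) - 2*(n:ℝ)*Λ + Real.log (rbmS D r₀ n) * T
      unfold rbmP
      have hn0 : (0:ℝ) ≤ (n:ℝ) := Nat.cast_nonneg n
      nlinarith
    calc f y ≤ Real.exp (-(rbmSg α D n) - 2*(n:ℝ)*Λ) * rbmS D r₀ n ^ T :=
          hfyA.trans hA2
      _ ≤ I := hIlow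
      _ ≤ rbmM α D r₀ T Λ L n * I := le_mul_of_one_le_left hI0 (rbmM_one_le hT)
end
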